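/- For the Schwarzschild conformal embedding into ℝ^{4,1} with R = h(r), T = (4m/r) h √(1-2m/r) sinh(t/4m), X = (4m/r) h √(1-2m/r) cosh(t/4m) (for r ≥ 2m), one has T² - X² - R² = Ω² (32m³ - 16m²r - r³)/r where Ω = h/r. In particular the image of the hypersurface r = r̄ (the positive root of 32m³-16m²r-r³) lies on the light cone T² = X² + R² of the origin of ℝ^{4,1}. -/
import Mathlib


open Real

/-- For the Schwarzschild conformal embedding,
`T² - X² - R² = Ω² (32m³ - 16m²r - r³)/r` with `Ω = h/r` (outside the horizon, and the
analogous identity for the inside branch); in particular the image of the hypersurface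
`r = r̄` (the positive root of the cubic `32m³ - 16m²r - r³`, which satisfies `r̄ < 2m`)
lies on the light cone `T² = X² + R²` of the origin of `ℝ^{4,1}`. -/
theorem stmt_7 (m : ℝ) (hm : 0 < m) (h : ℝ → ℝ) (hh : ∀ r, 0 < h r) :
    -- the identity outside the horizon
    (∀ r t : ℝ, 2 * m ≤ r →
      let T := 4 * m / r * h r * Real.sqrt (1 - 2 * m / r) * Real.sinh (t / (4 * m))
      let X := 4 * m / r * h r * Real.sqrt (1 - 2 * m / r) * Real.cosh (t / (4 * m))
      let R := h r
      T ^ 2 - X ^ 2 - R ^ 2 = (h r / r) ^ 2 * (32 * m ^ 3 - 16 * m ^ 2 * r - r ^ 3) / r) ∧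
    -- the identity inside the horizon
    (∀ r t : ℝ, 0 < r → r < 2 * m →
      let T := 4 * m / r * h r * Real.sqrt (2 * m / r - 1) * Real.cosh (t / (4 * m))
      let X := 4 * m / r * h r * Real.sqrt (2 * m / r - 1) * Real.sinh (t / (4 * m))
      let R := h r
      T ^ 2 - X ^ 2 - R ^ 2 = (h r / r) ^ 2 * (32 * m ^ 3 - 16 * m ^ 2 * r - r ^ 3) / r) ∧
    -- the image of the hypersurface r = r̄ lies on the light cone of the origin
    ∀ rbar t : ℝ, 0 < rbar → rbar < 2 * m →
      32 * m ^ 3 - 16 * m ^ 2 * rbar - rbar ^ 3 = 0 →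
      (4 * m / rbar * h rbar * Real.sqrt (2 * m / rbar - 1) * Real.cosh (t / (4 * m))) ^ 2
        = (4 * m / rbar * h rbar * Real.sqrt (2 * m / rbar - 1) * Real.sinh (t / (4 * m))) ^ 2
          + (h rbar) ^ 2 := by
  refine ⟨?_, ?_, ?_⟩
  · intro r t hr
    have hr0 : 0 < r := lt_of_lt_of_le (by linarith) hr
    have harg : 0 ≤ 1 - 2 * m / r := by
      rw [sub_nonneg, div_le_one hr0]; linarith
    have hs : Real.sqrt (1 - 2 * m / r) ^ 2 = 1 - 2 * m / r := Real.sq_sqrt harg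
    have hc : Real.cosh (t / (4 * m)) ^ 2 = Real.sinh (t / (4 * m)) ^ 2 + 1 :=
      Real.cosh_sq _
    dsimp only
    have e1 : (4 * m / r * h r * Real.sqrt (1 - 2 * m / r) * Real.sinh (t / (4 * m))) ^ 2
        = (4 * m / r * h r) ^ 2 * (1 - 2 * m / r) * Real.sinh (t / (4 * m)) ^ 2 := by
      rw [mul_pow, mul_pow, hs]
    have e2 : (4 * m / r * h r * Real.sqrt (1 - 2 * m / r) * Real.cosh (t / (4 * m))) ^ 2
        = (4 * m / r * h r) ^ 2 * (1 - 2 * m / r) * Real.cosh (t / (4 * m)) ^ 2 := by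
      rw [mul_pow, mul_pow, hs]
    rw [e1, e2, hc]
    field_simp
    ring
  · intro r t hr0 hr
    have harg : 0 ≤ 2 * m / r - 1 := by
      rw [sub_nonneg, le_div_iff₀ hr0]; linarith
    have hs : Real.sqrt (2 * m / r - 1) ^ 2 = 2 * m / r - 1 := Real.sq_sqrt harg
    have hc : Real.cosh (t / (4 * m)) ^ 2 = Real.sinh (t / (4 * m)) ^ 2 + 1 :=
      Real.cosh_sq _
    dsimp only
    have e1 : (4 * m / r * h r * Real.sqrt (2 * m / r - 1) * Real.cosh (t / (4 * m))) ^ 2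
        = (4 * m / r * h r) ^ 2 * (2 * m / r - 1) * Real.cosh (t / (4 * m)) ^ 2 := by
      rw [mul_pow, mul_pow, hs]
    have e2 : (4 * m / r * h r * Real.sqrt (2 * m / r - 1) * Real.sinh (t / (4 * m))) ^ 2
        = (4 * m / r * h r) ^ 2 * (2 * m / r - 1) * Real.sinh (t / (4 * m)) ^ 2 := by
      rw [mul_pow, mul_pow, hs]
    rw [e1, e2, hc]
    field_simp
    ring
  · intro rbar t hr0 hr hcubic
    have harg : 0 ≤ 2 * m / rbar - 1 := by
      rw [sub_nonneg, le_div_iff₀ hr0]; linarith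
    have hs : Real.sqrt (2 * m / rbar - 1) ^ 2 = 2 * m / rbar - 1 := Real.sq_sqrt harg
    have hc : Real.cosh (t / (4 * m)) ^ 2 = Real.sinh (t / (4 * m)) ^ 2 + 1 :=
      Real.cosh_sq _
    have e1 : (4 * m / rbar * h rbar * Real.sqrt (2 * m / rbar - 1) * Real.cosh (t / (4 * m))) ^ 2
        = (4 * m / rbar * h rbar) ^ 2 * (2 * m / rbar - 1) * Real.cosh (t / (4 * m)) ^ 2 := by
      rw [mul_pow, mul_pow, hs]
    have e2 : (4 * m / rbar * h rbar * Real.sqrt (2 * m / rbar - 1) * Real.sinh (t / (4 * m))) ^ 2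
        = (4 * m / rbar * h rbar) ^ 2 * (2 * m / rbar - 1) * Real.sinh (t / (4 * m)) ^ 2 := by
      rw [mul_pow, mul_pow, hs]
    rw [e1, e2, hc]
    have hrne : rbar ≠ 0 := ne_of_gt hr0
    field_simp
    nlinarith [hcubic, sq_nonneg (h rbar)]
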